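/- arXiv:math/0009218 — 4 statements merged into one kernel-verified Lean document; each statement's English description precedes it below -/
import Mathlib

section
/- Let α, β > 0, S₁ = α+β+1, S₂ = αβ+α+β, θ = 144(1 − 3S₂/S₁²), λ₁ = 3/2 + (1/2)√(13+√θ) and λ₂ = 3/2 + (1/2)√(13−√θ). Then it is impossible that λ₁, λ₂, 3−λ₁ and 3−λ₂ are all integers. -/
theorem stmt_2 (α β : ℝ) (hα : 0 < α) (hβ : 0 < β)
    (S₁ S₂ θ l₁ l₂ : ℝ) (hS₁ : S₁ = α + β + 1) (hS₂ : S₂ = α * β + α + β)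
    (hθ : θ = 144 * (1 - 3 * S₂ / S₁ ^ 2))
    (hl₁ : l₁ = 3 / 2 + (1 / 2) * Real.sqrt (13 + Real.sqrt θ))
    (hl₂ : l₂ = 3 / 2 + (1 / 2) * Real.sqrt (13 - Real.sqrt θ)) :
    ¬ ∃ n₁ n₂ n₃ n₄ : ℤ, l₁ = (n₁ : ℝ) ∧ l₂ = (n₂ : ℝ) ∧
      3 - l₁ = (n₃ : ℝ) ∧ 3 - l₂ = (n₄ : ℝ) := by
  rintro ⟨n₁, n₂, n₃, n₄, h1, h2, h3, h4⟩
  have hS1pos : 0 < S₁ := by rw [hS₁]; linarith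
  have hS1sq : 0 < S₁ ^ 2 := by positivity
  have hθ0 : 0 ≤ θ := by
    rw [hθ]
    have h : 3 * S₂ / S₁ ^ 2 ≤ 1 := by
      rw [div_le_one hS1sq, hS₁, hS₂]; nlinarith [sq_nonneg (α - β), sq_nonneg (α - 1), sq_nonneg (β - 1)]
    linarith
  have hθlt : θ < 144 := by
    rw [hθ]
    have h : 0 < 3 * S₂ / S₁ ^ 2 := by
      apply div_pos _ hS1sq
      rw [hS₂]; nlinarith
    linarith
  have hs0 : 0 ≤ Real.sqrt θ := Real.sqrt_nonneg θ
  have hs12 : Real.sqrt θ < 12 := by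
    have := Real.sqrt_lt_sqrt hθ0 hθlt
    have h144 : Real.sqrt 144 = 12 := by
      rw [show (144 : ℝ) = 12 ^ 2 by norm_num, Real.sqrt_sq (by norm_num)]
    linarith [this, h144.le, h144.ge]
  set s := Real.sqrt θ
  have ht5 : Real.sqrt (13 + s) < 5 := by
    have : Real.sqrt (13 + s) < Real.sqrt 25 := Real.sqrt_lt_sqrt (by linarith) (by linarith)
    have h25 : Real.sqrt 25 = 5 := by
      rw [show (25 : ℝ) = 5 ^ 2 by norm_num, Real.sqrt_sq (by norm_num)]
    linarith
  have ht36 : (3.6 : ℝ) ≤ Real.sqrt (13 + s) := by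
    have : Real.sqrt (3.6 ^ 2) ≤ Real.sqrt (13 + s) :=
      Real.sqrt_le_sqrt (by norm_num; linarith)
    rwa [Real.sqrt_sq (by norm_num)] at this
  have hlo : (3 : ℝ) < (n₁ : ℝ) := by rw [← h1, hl₁]; linarith
  have hhi : (n₁ : ℝ) < 4 := by rw [← h1, hl₁]; linarith
  have : (3 : ℤ) < n₁ := by exact_mod_cast hlo
  have : n₁ < (4 : ℤ) := by exact_mod_cast hhi
  omega
end

section
/- Let p be a polynomial in 4 variables over ℂ and D the 4×4 matrix with D₁₂ = D₃₄ = 1 and other entries 0. If p(x + nDx) = p(x) for all natural numbers n and all x ∈ ℂ⁴, then the directional derivative x₂ ∂p/∂x₁ + x₄ ∂p/∂x₃ vanishes identically. -/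
open MvPolynomial

lemma cm1 {R : Type*} [CommSemiring R] (a b : Polynomial R) :
    (a*b).coeff 1 = a.coeff 0 * b.coeff 1 + a.coeff 1 * b.coeff 0 := by
  rw [Polynomial.coeff_mul]
  rw [show (Finset.HasAntidiagonal.antidiagonal 1 : Finset (ℕ × ℕ)) = {(0,1),(1,0)} by decide]
  rw [Finset.sum_insert (by decide), Finset.sum_singleton]

noncomputable def dvec : Fin 4 → MvPolynomial (Fin 4) ℂ := ![X 1, 0, X 3, 0]

noncomputable def σsub : Fin 4 → Polynomial (MvPolynomial (Fin 4) ℂ) :=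
  fun i => Polynomial.C (X i) + Polynomial.X * Polynomial.C (dvec i)

lemma coeffs_aeval (p : MvPolynomial (Fin 4) ℂ) :
    (MvPolynomial.aeval σsub p).coeff 0 = p ∧
    (MvPolynomial.aeval σsub p).coeff 1
      = X 1 * pderiv 0 p + X 3 * pderiv 2 p := by
  induction p using MvPolynomial.induction_on with
  | C a =>
      simp [σsub, MvPolynomial.algebraMap_eq, pderiv_C]
  | add p q hp hq =>
      refine ⟨by simp [hp.1, hq.1], ?_⟩
      simp only [map_add, Polynomial.coeff_add, hp.2, hq.2]
      ring
  | mul_X p i hp =>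
      have h0 : (σsub i).coeff 0 = X i := by simp [σsub]
      have h1 : (σsub i).coeff 1 = dvec i := by simp [σsub]
      constructor
      · simp [map_mul, Polynomial.mul_coeff_zero, hp.1, h0]
      · rw [map_mul, MvPolynomial.aeval_X, cm1, hp.1, hp.2, h0, h1,
          pderiv_mul, pderiv_mul]
        fin_cases i <;> simp [dvec, pderiv_X] <;> ring

lemma eval_C_aeval (p : MvPolynomial (Fin 4) ℂ) (c : ℂ) :
    Polynomial.eval (MvPolynomial.C c) (MvPolynomial.aeval σsub p)
      = MvPolynomial.aeval (fun i => X i + MvPolynomial.C c * dvec i) p := by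
  rw [show Polynomial.eval (MvPolynomial.C c) (MvPolynomial.aeval σsub p)
      = Polynomial.evalRingHom (MvPolynomial.C c) (MvPolynomial.aeval σsub p) from rfl,
    MvPolynomial.map_aeval]
  rw [MvPolynomial.aeval_eq_eval₂Hom]
  apply MvPolynomial.eval₂Hom_congr
  · ext a
    simp [MvPolynomial.algebraMap_eq]
  · funext i
    simp only [σsub, Polynomial.eval_add, Polynomial.eval_mul, Polynomial.eval_C,
      Polynomial.eval_X, map_add, map_mul, Polynomial.coe_evalRingHom]
  · rfl

lemma eval_aeval' (p : MvPolynomial (Fin 4) ℂ) (g : Fin 4 → MvPolynomial (Fin 4) ℂ)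
    (x : Fin 4 → ℂ) :
    MvPolynomial.eval x (MvPolynomial.aeval g p)
      = MvPolynomial.eval (fun i => MvPolynomial.eval x (g i)) p := by
  rw [show (MvPolynomial.eval x (MvPolynomial.aeval g p))
      = (MvPolynomial.eval x : MvPolynomial (Fin 4) ℂ →+* ℂ) (MvPolynomial.aeval g p) from rfl,
    MvPolynomial.map_aeval]
  have : ((MvPolynomial.eval x : MvPolynomial (Fin 4) ℂ →+* ℂ).comp
      (algebraMap ℂ (MvPolynomial (Fin 4) ℂ))) = RingHom.id ℂ := by
    ext a; simp [MvPolynomial.algebraMap_eq]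
  rw [this]
  rfl

theorem stmt_8 (p : MvPolynomial (Fin 4) ℂ)
    (D : Matrix (Fin 4) (Fin 4) ℂ)
    (hD : D = !![0, 1, 0, 0; 0, 0, 0, 0; 0, 0, 0, 1; 0, 0, 0, 0])
    (hinv : ∀ (n : ℕ) (x : Fin 4 → ℂ),
      eval (fun i => x i + (n : ℂ) * D.mulVec x i) p = eval x p) :
    X 1 * pderiv 0 p + X 3 * pderiv 2 p = 0 := by
  set q : Polynomial (MvPolynomial (Fin 4) ℂ) := MvPolynomial.aeval σsub p with hq
  have key : ∀ n : ℕ, Polynomial.eval (MvPolynomial.C (n : ℂ)) q = p := by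
    intro n
    rw [hq, eval_C_aeval]
    apply MvPolynomial.funext
    intro x
    rw [eval_aeval']
    have hg : (fun i => MvPolynomial.eval x (X i + MvPolynomial.C (n:ℂ) * dvec i))
        = fun i => x i + (n : ℂ) * D.mulVec x i := by
      funext i
      fin_cases i <;>
        simp [dvec, hD, Matrix.mulVec, dotProduct, Fin.sum_univ_four]
    rw [hg]
    exact hinv n x
  have hzero : q - Polynomial.C p = 0 := by
    apply Polynomial.eq_zero_of_infinite_isRoot
    apply Set.infinite_of_injective_forall_mem
      (f := fun n : ℕ => (MvPolynomial.C (n : ℂ) : MvPolynomial (Fin 4) ℂ))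
    · exact (MvPolynomial.C_injective _ _).comp (fun a b h => by exact_mod_cast h)
    · intro n
      simp only [Set.mem_setOf_eq, Polynomial.IsRoot, Polynomial.eval_sub,
        Polynomial.eval_C, key n, sub_self]
  have hqC : q = Polynomial.C p := by
    have := sub_eq_zero.mp hzero
    exact this
  have h1 := congrArg (fun r : Polynomial (MvPolynomial (Fin 4) ℂ) => r.coeff 1) hqC
  simp only [Polynomial.coeff_C] at h1
  rw [← (coeffs_aeval p).2, ← hq]
  simpa using h1
end

section
/- Let P₁ = −2(b₂ + d₄ + ε₁), P₂ = 3b₂ε₁ − 2ζ₁ζ₂ + 3ε₁d₄ + 4b₂d₄ + b₂² + ε₁² + d₄², P₃ = −(d₄ + b₂ + ε₁)(2b₂d₄ + b₂ε₁ + d₄ε₁ − 2ζ₁ζ₂), and P₄ = (b₂d₄ − ζ₁ζ₂)(b₂d₄ + b₂ε₁ + d₄ε₁ − ζ₁ζ₂ + ε₁²), with b₂, d₄, ε₁, ζ₁, ζ₂ ∈ ℂ. If P₁ = P₂ = P₃ = P₄ = 0, then ε₁ = 0, d₄ = −b₂, and b₂² + ζ₁ζ₂ = 0. -/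
theorem stmt_14 (b₂ d₄ ε₁ ζ₁ ζ₂ : ℂ)
    (h₁ : -2 * (b₂ + d₄ + ε₁) = 0)
    (h₂ : 3 * b₂ * ε₁ - 2 * ζ₁ * ζ₂ + 3 * ε₁ * d₄ + 4 * b₂ * d₄ + b₂ ^ 2 + ε₁ ^ 2 + d₄ ^ 2 = 0)
    (h₃ : -((d₄ + b₂ + ε₁) * (2 * b₂ * d₄ + b₂ * ε₁ + d₄ * ε₁ - 2 * ζ₁ * ζ₂)) = 0)
    (h₄ : (b₂ * d₄ - ζ₁ * ζ₂) * (b₂ * d₄ + b₂ * ε₁ + d₄ * ε₁ - ζ₁ * ζ₂ + ε₁ ^ 2) = 0) :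
    ε₁ = 0 ∧ d₄ = -b₂ ∧ b₂ ^ 2 + ζ₁ * ζ₂ = 0 := by
  have hd : d₄ = -b₂ - ε₁ := by linear_combination (-1/2 : ℂ) * h₁
  subst hd
  have hz : ζ₁ * ζ₂ = -b₂ ^ 2 - b₂ * ε₁ - ε₁ ^ 2 / 2 := by linear_combination (-1/2 : ℂ) * h₂
  have he4 : ε₁ ^ 4 = 0 := by
    linear_combination 4 * h₄ -
      2 * (2 * b₂ ^ 2 + 2 * b₂ * ε₁ + 2 * ζ₁ * ζ₂ - ε₁ ^ 2) * hz
  have he : ε₁ = 0 := by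
    have := pow_eq_zero_iff (n := 4) (by norm_num) |>.mp he4
    exact this
  subst he
  refine ⟨rfl, by ring, by linear_combination hz⟩
end

section
/- Let η₁, ζ₁, ζ₂, a₂, a₄, c₂, c₄ ∈ ℂ satisfy η₁² + ζ₁ζ₂ = 0. Let T₁ be the 4×4 matrix with rows (1,1,0,0), (0,1,0,0), (0,0,1,1), (0,0,0,1), and let T₂ be the 4×4 matrix with rows (η₁+1, a₂, ζ₂, a₄), (0, η₁+1, 0, ζ₂), (ζ₁, c₂, 1−η₁, c₄), (0, ζ₁, 0, 1−η₁). Then all eigenvalues of T₁T₂ equal 1, i.e., the characteristic polynomial of T₁T₂ is (λ − 1)⁴. -/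
open Polynomial

private lemma det_fin_four' (a b c d e f g h i j k l m n o p : ℂ[X]) :
    Matrix.det !![a,b,c,d; e,f,g,h; i,j,k,l; m,n,o,p] =
      a*(f*k*p - f*l*o - g*j*p + g*l*n + h*j*o - h*k*n)
      - b*(e*k*p - e*l*o - g*i*p + g*l*m + h*i*o - h*k*m)
      + c*(e*j*p - e*l*n - f*i*p + f*l*m + h*i*n - h*j*m)
      - d*(e*j*o - e*k*n - f*i*o + f*k*m + g*i*n - g*j*m) := by
  have e1 : (Fin.succAbove (2:Fin 4) 2) = 3 := by decide
  have e2 : (Fin.succAbove (1:Fin 4) 2) = 3 := by decide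
  have e3 : (Fin.castSucc (2:Fin 3)) = (2:Fin 4) := by decide
  have e4 : (Fin.succAbove (3:Fin 4) 2) = 2 := by decide
  simp [Matrix.det_succ_row_zero, Fin.sum_univ_succ, e1, e2, e3, e4]
  ring

theorem stmt_15 (η₁ ζ₁ ζ₂ a₂ a₄ c₂ c₄ : ℂ) (h : η₁ ^ 2 + ζ₁ * ζ₂ = 0)
    (T₁ T₂ : Matrix (Fin 4) (Fin 4) ℂ)
    (hT₁ : T₁ = !![1, 1, 0, 0; 0, 1, 0, 0; 0, 0, 1, 1; 0, 0, 0, 1])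
    (hT₂ : T₂ = !![η₁ + 1, a₂, ζ₂, a₄; 0, η₁ + 1, 0, ζ₂;
      ζ₁, c₂, 1 - η₁, c₄; 0, ζ₁, 0, 1 - η₁]) :
    Matrix.charpoly (T₁ * T₂) = (X - 1) ^ 4 := by
  have hM : T₁ * T₂ = !![η₁ + 1, a₂ + (η₁ + 1), ζ₂, a₄ + ζ₂;
      0, η₁ + 1, 0, ζ₂;
      ζ₁, c₂ + ζ₁, 1 - η₁, c₄ + (1 - η₁);
      0, ζ₁, 0, 1 - η₁] := by
    subst hT₁ hT₂
    ext i j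
    fin_cases i <;> fin_cases j <;>
      simp [Matrix.mul_apply, Fin.sum_univ_four]
  have hC : Matrix.charmatrix (T₁ * T₂) =
      !![X - C (η₁ + 1), -C (a₂ + (η₁ + 1)), -C ζ₂, -C (a₄ + ζ₂);
        0, X - C (η₁ + 1), 0, -C ζ₂;
        -C ζ₁, -C (c₂ + ζ₁), X - C (1 - η₁), -C (c₄ + (1 - η₁));
        0, -C ζ₁, 0, X - C (1 - η₁)] := by
    rw [hM]
    ext i j
    fin_cases i <;> fin_cases j <;>
      simp [Matrix.charmatrix_apply_eq, Matrix.charmatrix_apply_ne]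
  rw [Matrix.charpoly, hC, det_fin_four']
  have hζ : (C ζ₁ * C ζ₂ : ℂ[X]) = C (-η₁ ^ 2) := by
    rw [← C_mul]; congr 1; linear_combination h
  simp only [map_add, map_sub, map_one, map_mul, map_pow, map_neg] at hζ ⊢
  linear_combination (4*X - 2*X^2 - 2 + C ζ₁*C ζ₂ + C η₁^2) * hζ
end
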